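/- Given a policy π, let (v*, q*) be an optimal solution of the policy-evaluation primal LP for π. Then v* satisfies the Bellman equation v*(s) = Σ_a π(a|s) Σ_{s'} τ(s'|s,a)(r(s,a,s') + γ v*(s')) for every state s, and q*(s,a) = Σ_{s'} τ(s'|s,a)(r(s,a,s') + γ v*(s')) for all s,a. Consequently v* = v^π and q* = q^π, the value functions of π. -/

import Mathlib

open Finset

section MDPDefs

variable {S A : Type*}

/-- A (stationary, stochastic) policy on finite state/action spaces. -/
def IsPolicy [Fintype A] (π : S → A → ℝ) : Prop :=
  (∀ s a, 0 ≤ π s a) ∧ ∀ s, ∑ a, π s a = 1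

/-- `d` is the (discounted) state visitation density of the policy `π`:
it satisfies `d(s) = (1-γ)ι(s) + γ Σ_{s',a'} d(s') π(a'|s') τ(s|s',a')`. -/
def IsVisit [Fintype S] [Fintype A] (ι : S → ℝ) (τ : S → A → S → ℝ) (γ : ℝ)
    (π : S → A → ℝ) (d : S → ℝ) : Prop :=
  ∀ s, d s = (1 - γ) * ι s + γ * ∑ s', ∑ a', d s' * π s' a' * τ s' a' s

/-- Feasibility for the value-learning dual LP. -/
def DualFeas [Fintype S] [Fintype A] (ι : S → ℝ) (τ : S → A → S → ℝ) (γ : ℝ)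
    (d : S → ℝ) (p : S → A → ℝ) : Prop :=
  (∀ s, ∑ a, p s a = d s) ∧
  (∀ s, d s = (1 - γ) * ι s + γ * ∑ s', ∑ a', p s' a' * τ s' a' s) ∧
  ∀ s a, 0 ≤ p s a

/-- The dual objective: the average reward under the state-action density `p`,
`Σ_{s,a} p(s,a) Σ_{s'} τ(s'|s,a) r(s,a,s')`. -/
def DualObj [Fintype S] [Fintype A] (τ : S → A → S → ℝ) (r : S → A → S → ℝ)
    (p : S → A → ℝ) : ℝ :=
  ∑ s, ∑ a, p s a * ∑ s', τ s a s' * r s a s'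

/-- The standing MDP assumptions: `ι` is an everywhere-positive initial-state
distribution, `τ(·|s,a)` are transition probabilities and `γ ∈ [0,1)`. -/
def IsMDP [Fintype S] [Fintype A] (ι : S → ℝ) (τ : S → A → S → ℝ) (γ : ℝ) : Prop :=
  (∀ s, 0 < ι s) ∧ (∑ s, ι s = 1) ∧
  (∀ s a s', 0 ≤ τ s a s') ∧ (∀ s a, ∑ s', τ s a s' = 1) ∧
  0 ≤ γ ∧ γ < 1

end MDPDefs

lemma pe_contraction_zero {S A : Type*} [Fintype S] [Fintype A] [Nonempty S]
    (τ : S → A → S → ℝ) (γ : ℝ) (π : S → A → ℝ)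
    (hγ0 : 0 ≤ γ) (hγ1 : γ < 1)
    (hπ0 : ∀ s a, 0 ≤ π s a) (hπ1 : ∀ s, ∑ a, π s a = 1)
    (hτ0 : ∀ s a s', 0 ≤ τ s a s') (hτ1 : ∀ s a, ∑ s', τ s a s' = 1)
    (e : S → ℝ)
    (he : ∀ s, e s = γ * ∑ a, π s a * ∑ s', τ s a s' * e s') :
    ∀ s, e s = 0 := by
  obtain ⟨s0, _, hs0⟩ := Finset.exists_max_image (Finset.univ : Finset S)
    (fun s => |e s|) Finset.univ_nonempty
  have hmax : ∀ s, |e s| ≤ |e s0| := fun s => hs0 s (Finset.mem_univ s)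
  have key : |e s0| ≤ γ * |e s0| := by
    calc |e s0| = |γ * ∑ a, π s0 a * ∑ s', τ s0 a s' * e s'| := by rw [← he]
    _ = γ * |∑ a, π s0 a * ∑ s', τ s0 a s' * e s'| := by
        rw [abs_mul, abs_of_nonneg hγ0]
    _ ≤ γ * |e s0| := by
        refine mul_le_mul_of_nonneg_left ?_ hγ0
        calc |∑ a, π s0 a * ∑ s', τ s0 a s' * e s'|
            ≤ ∑ a, |π s0 a * ∑ s', τ s0 a s' * e s'| := Finset.abs_sum_le_sum_abs _ _
          _ ≤ ∑ a : A, π s0 a * |e s0| := by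
              refine Finset.sum_le_sum fun a _ => ?_
              rw [abs_mul, abs_of_nonneg (hπ0 s0 a)]
              refine mul_le_mul_of_nonneg_left ?_ (hπ0 s0 a)
              calc |∑ s', τ s0 a s' * e s'| ≤ ∑ s', |τ s0 a s' * e s'| :=
                    Finset.abs_sum_le_sum_abs _ _
                _ ≤ ∑ s' : S, τ s0 a s' * |e s0| := by
                    refine Finset.sum_le_sum fun s' _ => ?_
                    rw [abs_mul, abs_of_nonneg (hτ0 s0 a s')]
                    exact mul_le_mul_of_nonneg_left (hmax s') (hτ0 s0 a s')
                _ = |e s0| := by rw [← Finset.sum_mul, hτ1, one_mul]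
          _ = |e s0| := by rw [← Finset.sum_mul, hπ1, one_mul]
  have h0 : |e s0| ≤ 0 := by nlinarith [abs_nonneg (e s0)]
  intro s
  have h1 := hmax s
  have : |e s| = 0 := le_antisymm (by linarith) (abs_nonneg _)
  exact abs_eq_zero.mp this

/-- an optimal solution `(v*, q*)` of the policy-evaluation primal LP for a
policy `π` satisfies the Bellman equation of `π`, and hence equals the value functions
`v^π`, `q^π` (the unique solutions of the Bellman equation). -/
theorem pe_primal_bellman
    {S A : Type*} [Fintype S] [Fintype A] [Nonempty S] [Nonempty A]
    (ι : S → ℝ) (τ : S → A → S → ℝ) (γ : ℝ) (r : S → A → S → ℝ)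
    (hMDP : IsMDP ι τ γ)
    (π : S → A → ℝ) (hPol : IsPolicy π)
    (vStar : S → ℝ) (qStar : S → A → ℝ)
    (hFeas : (∀ s, ∑ a, π s a * qStar s a ≤ vStar s) ∧
      (∀ s a, qStar s a = ∑ s', τ s a s' * (r s a s' + γ * vStar s')))
    (hOpt : ∀ (v : S → ℝ) (q : S → A → ℝ),
      ((∀ s, ∑ a, π s a * q s a ≤ v s) ∧
        (∀ s a, q s a = ∑ s', τ s a s' * (r s a s' + γ * v s'))) →
      ∑ s, ι s * ((1 - γ) * vStar s) ≤ ∑ s, ι s * ((1 - γ) * v s)) :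
    (∀ s, vStar s = ∑ a, π s a * ∑ s', τ s a s' * (r s a s' + γ * vStar s')) ∧
    (∀ s a, qStar s a = ∑ s', τ s a s' * (r s a s' + γ * vStar s')) ∧
    (∀ v : S → ℝ,
      (∀ s, v s = ∑ a, π s a * ∑ s', τ s a s' * (r s a s' + γ * v s')) → v = vStar) ∧
    (∀ q : S → A → ℝ,
      (∀ s a, q s a = ∑ s', τ s a s' * (r s a s' + γ * ∑ a', π s' a' * q s' a')) →
      q = qStar) := by
  obtain ⟨hι, hιsum, hτ0, hτ1, hγ0, hγ1⟩ := hMDP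
  obtain ⟨hπ0, hπ1⟩ := hPol
  set T : (S → ℝ) → S → ℝ :=
    fun v s => ∑ a, π s a * ∑ s', τ s a s' * (r s a s' + γ * v s') with hT
  have hMono : ∀ u v : S → ℝ, (∀ s, u s ≤ v s) → ∀ s, T u s ≤ T v s := by
    intro u v huv s
    refine Finset.sum_le_sum fun a _ => mul_le_mul_of_nonneg_left ?_ (hπ0 s a)
    refine Finset.sum_le_sum fun s' _ => mul_le_mul_of_nonneg_left ?_ (hτ0 s a s')
    have := mul_le_mul_of_nonneg_left (huv s') hγ0
    linarith
  have hTle : ∀ s, T vStar s ≤ vStar s := by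
    intro s
    have h := hFeas.1 s
    simp only [hFeas.2] at h
    exact h
  -- optimality forbids strict slack
  have hBell : ∀ s, vStar s = T vStar s := by
    have hge : ∀ s, vStar s ≤ T vStar s := by
      by_contra h
      push_neg at h
      obtain ⟨s1, hs1⟩ := h
      have hfeas2 : ∀ s, ∑ a, π s a * (fun s a => ∑ s', τ s a s' * (r s a s' + γ * T vStar s')) s a
          ≤ T vStar s := fun s => hMono (T vStar) vStar hTle s
      have hopt := hOpt (T vStar)
        (fun s a => ∑ s', τ s a s' * (r s a s' + γ * T vStar s'))
        ⟨hfeas2, fun s a => rfl⟩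
      have hlt : ∑ s, ι s * ((1 - γ) * T vStar s) < ∑ s, ι s * ((1 - γ) * vStar s) := by
        refine Finset.sum_lt_sum (fun s _ => ?_) ⟨s1, Finset.mem_univ s1, ?_⟩
        · exact mul_le_mul_of_nonneg_left
            (mul_le_mul_of_nonneg_left (hTle s) (by linarith)) (le_of_lt (hι s))
        · exact mul_lt_mul_of_pos_left
            (mul_lt_mul_of_pos_left hs1 (by linarith)) (hι s1)
      linarith
    exact fun s => le_antisymm (hge s) (hTle s)
  refine ⟨hBell, hFeas.2, ?_, ?_⟩
  · -- uniqueness for v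
    intro v hv
    have he : ∀ s, (fun s => v s - vStar s) s
        = γ * ∑ a, π s a * ∑ s', τ s a s' * (v s' - vStar s') := by
      intro s
      simp only
      rw [hv s, hBell s, hT]
      rw [Finset.mul_sum, ← Finset.sum_sub_distrib]
      refine Finset.sum_congr rfl fun a _ => ?_
      rw [← mul_sub, ← Finset.sum_sub_distrib, Finset.mul_sum, Finset.mul_sum,
        Finset.mul_sum]
      refine Finset.sum_congr rfl fun s' _ => ?_
      ring
    have hz := pe_contraction_zero τ γ π hγ0 hγ1 hπ0 hπ1 hτ0 hτ1 _ he
    funext s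
    have := hz s
    beta_reduce at this
    linarith
  · -- uniqueness for q
    intro q hq
    set v : S → ℝ := fun s => ∑ a', π s a' * q s a' with hvdef
    have hv : ∀ s, v s = ∑ a, π s a * ∑ s', τ s a s' * (r s a s' + γ * v s') := by
      intro s
      simp only [hvdef]
      exact Finset.sum_congr rfl fun a _ => by rw [hq s a]
    have hveq : v = vStar := by
      -- reuse the v-uniqueness argument
      have he : ∀ s, (fun s => v s - vStar s) s
          = γ * ∑ a, π s a * ∑ s', τ s a s' * (v s' - vStar s') := by
        intro s
        simp only
        rw [hv s, hBell s, hT]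
        rw [Finset.mul_sum, ← Finset.sum_sub_distrib]
        refine Finset.sum_congr rfl fun a _ => ?_
        rw [← mul_sub, ← Finset.sum_sub_distrib, Finset.mul_sum, Finset.mul_sum,
          Finset.mul_sum]
        refine Finset.sum_congr rfl fun s' _ => ?_
        ring
      have hz := pe_contraction_zero τ γ π hγ0 hγ1 hπ0 hπ1 hτ0 hτ1 _ he
      funext s
      have := hz s
      beta_reduce at this
      linarith
    funext s a
    rw [hq s a, hFeas.2 s a]
    refine Finset.sum_congr rfl fun s' _ => ?_
    have : ∑ a', π s' a' * q s' a' = vStar s' := by rw [← hveq]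
    rw [this]
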